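/- Let C be a right triangulated category satisfying Assumption 2.10, with subcategories D ⊆ Z where D is factor-through-epic, Z is extension-closed, and Z = μ(Z;D) (every object of Z either lies in D or admits a right triangle Z' → D' → M → TZ' with Z' in Z, D' in D, the first map a left D-approximation and the second a right D-approximation). Then the induced shift σ on the quotient category Z/D, defined by completing left D-approximations to right triangles, is a well-defined additive endofunctor of Z/D. -/

import Mathlib

open CategoryTheory Limits

attribute [local instance] CategoryTheory.Limits.hasBinaryBiproducts_of_finite_biproducts

universe v u

variable (C : Type u) [Category.{v} C]

/-- A sextuple `A ⟶ B ⟶ C ⟶ TA` in a category with an endofunctor `T`. -/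
structure RightTriangle (T : C ⥤ C) where
  obj₁ : C
  obj₂ : C
  obj₃ : C
  mor₁ : obj₁ ⟶ obj₂
  mor₂ : obj₂ ⟶ obj₃
  mor₃ : obj₃ ⟶ T.obj obj₁

variable {C}

/-- An isomorphism of sextuples. -/
def RightTriangle.Iso {T : C ⥤ C} (t t' : RightTriangle C T) : Prop :=
  ∃ (a : t.obj₁ ≅ t'.obj₁) (b : t.obj₂ ≅ t'.obj₂) (c : t.obj₃ ≅ t'.obj₃),
    t.mor₁ ≫ b.hom = a.hom ≫ t'.mor₁ ∧
    t.mor₂ ≫ c.hom = b.hom ≫ t'.mor₂ ∧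
    t.mor₃ ≫ T.map a.hom = c.hom ≫ t'.mor₃

open ZeroObject in
/-- A right triangulated category structure on an additive category `C`
with shift endofunctor `T`, following Assem–Beligiannis–Marmaridis:
axioms TR(0)-TR(5). -/
structure RightTriangulated [Preadditive C] [HasZeroObject C] [HasFiniteBiproducts C]
    (T : C ⥤ C) where
  shift_additive : T.Additive
  dist : Set (RightTriangle C T)
  /-- TR(0): closed under isomorphisms -/
  tr0 : ∀ t ∈ dist, ∀ t', RightTriangle.Iso t t' → t' ∈ dist
  /-- TR(1): `0 ⟶ A ⟶ A ⟶ 0` is a right triangle -/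
  tr1 : ∀ A : C, (⟨0, A, A, 0, 𝟙 A, 0⟩ : RightTriangle C T) ∈ dist
  /-- TR(2): every morphism extends to a right triangle -/
  tr2 : ∀ {A B : C} (f : A ⟶ B), ∃ (Z : C) (g : B ⟶ Z) (h : Z ⟶ T.obj A),
    (⟨A, B, Z, f, g, h⟩ : RightTriangle C T) ∈ dist
  /-- TR(3): rotation -/
  tr3 : ∀ t ∈ dist,
    (⟨t.obj₂, t.obj₃, T.obj t.obj₁, t.mor₂, t.mor₃, -T.map t.mor₁⟩ : RightTriangle C T) ∈ dist
  /-- TR(4): completion of commutative squares to morphisms of right triangles -/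
  tr4 : ∀ t ∈ dist, ∀ t' ∈ dist, ∀ (a : t.obj₁ ⟶ t'.obj₁) (b : t.obj₂ ⟶ t'.obj₂),
    t.mor₁ ≫ b = a ≫ t'.mor₁ →
    ∃ c : t.obj₃ ⟶ t'.obj₃,
      t.mor₂ ≫ c = b ≫ t'.mor₂ ∧ t.mor₃ ≫ T.map a = c ≫ t'.mor₃
  /-- TR(5): the octahedral axiom -/
  tr5 : ∀ {X Y Z U V W : C} (a : X ⟶ Y) (b : Y ⟶ Z) (c : Z ⟶ T.obj X)
    (d : Y ⟶ U) (e : U ⟶ V) (f : V ⟶ T.obj Y) (g : U ⟶ W) (h : W ⟶ T.obj X),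
    (⟨X, Y, Z, a, b, c⟩ : RightTriangle C T) ∈ dist →
    (⟨Y, U, V, d, e, f⟩ : RightTriangle C T) ∈ dist →
    (⟨X, U, W, a ≫ d, g, h⟩ : RightTriangle C T) ∈ dist →
    ∃ (l : Z ⟶ W) (i : W ⟶ V),
      b ≫ l = d ≫ g ∧ l ≫ h = c ∧ g ≫ i = e ∧ i ≫ f = h ≫ T.map a ∧
      (⟨Z, W, V, l, i, f ≫ T.map b⟩ : RightTriangle C T) ∈ dist

/-- Assumption 2.10: the rotation axiom can be reversed. -/
def Assumption210 [Preadditive C] [HasZeroObject C] [HasFiniteBiproducts C]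
    {T : C ⥤ C} (rt : RightTriangulated T) : Prop :=
  ∀ {A B Z : C} (f : A ⟶ B) (g : B ⟶ Z) (h : Z ⟶ T.obj A),
    (⟨B, Z, T.obj A, g, h, -T.map f⟩ : RightTriangle C T) ∈ rt.dist →
    (⟨A, B, Z, f, g, h⟩ : RightTriangle C T) ∈ rt.dist

/-- A morphism factors through an object of `S`. -/
def FactorsThru (S : Set C) {X Y : C} (f : X ⟶ Y) : Prop :=
  ∃ (D : C) (_ : D ∈ S) (u : X ⟶ D) (v : D ⟶ Y), u ≫ v = f

/-- `g : X ⟶ Y` is `S`-epic. -/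
def SEpic (S : Set C) {X Y : C} (g : X ⟶ Y) : Prop :=
  ∀ D ∈ S, ∀ u : D ⟶ Y, ∃ v : D ⟶ X, v ≫ g = u

/-- `f : X ⟶ Y` is `S`-monic. -/
def SMonic (S : Set C) {X Y : C} (f : X ⟶ Y) : Prop :=
  ∀ D ∈ S, ∀ u : X ⟶ D, ∃ v : Y ⟶ D, f ≫ v = u

/-- iterate of an endofunctor. -/
def iterFun (T : C ⥤ C) : ℕ → (C ⥤ C)
  | 0 => 𝟭 C
  | n + 1 => iterFun T n ⋙ T

/-- `S` is factor-through-epic: every `f ∈ [Tⁿ S](TX, TY)` with `n > 0` is of the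
form `T f'` for some `f' ∈ [Tⁿ⁻¹ S](X, Y)`. -/
def FactorThroughEpic (T : C ⥤ C) (S : Set C) : Prop :=
  ∀ (n : ℕ) (X Y : C) (f : T.obj X ⟶ T.obj Y),
    FactorsThru ((iterFun T (n + 1)).obj '' S) f →
    ∃ f' : X ⟶ Y, FactorsThru ((iterFun T n).obj '' S) f' ∧ T.map f' = f

/-- A subcategory (given by a set of objects) closed under isomorphisms,
finite direct sums and direct summands. -/
def IsSubcat [Preadditive C] [HasFiniteBiproducts C] (S : Set C) : Prop :=
  (∀ {X Y : C}, (X ≅ Y) → X ∈ S → Y ∈ S) ∧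
  (∀ {X Y : C}, X ∈ S → Y ∈ S → (X ⊞ Y) ∈ S) ∧
  (∀ {X Y : C} (s : Y ⟶ X) (r : X ⟶ Y), s ≫ r = 𝟙 Y → X ∈ S → Y ∈ S)

section Mutation

variable [Preadditive C] [HasZeroObject C] [HasFiniteBiproducts C]
  {T : C ⥤ C} (rt : RightTriangulated T)

/-- `μ(𝒵; 𝒟)`: objects `X` that lie in `𝒟` or are the left end of a right triangle
`X ⟶ D ⟶ Y ⟶ TX` with `Y ∈ 𝒵`, `D ∈ 𝒟`, the first map a left `𝒟`-approximation and
the second a right `𝒟`-approximation. -/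
def muSet (𝒵 𝒟 : Set C) : Set C :=
  {X | X ∈ 𝒟 ∨ ∃ (D Y : C) (f : X ⟶ D) (g : D ⟶ Y) (h : Y ⟶ T.obj X),
    (⟨X, D, Y, f, g, h⟩ : RightTriangle C T) ∈ rt.dist ∧
    D ∈ 𝒟 ∧ Y ∈ 𝒵 ∧ SMonic 𝒟 f ∧ SEpic 𝒟 g}

/-- `μ⁻¹(𝒳; 𝒟)`: objects `Y` that lie in `𝒟` or are the third term of a right triangle
`X ⟶ D ⟶ Y ⟶ TX` with `X ∈ 𝒳`, `D ∈ 𝒟`, the maps being left/right `𝒟`-approximations. -/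
def muInvSet (𝒳 𝒟 : Set C) : Set C :=
  {Y | Y ∈ 𝒟 ∨ ∃ (X D : C) (f : X ⟶ D) (g : D ⟶ Y) (h : Y ⟶ T.obj X),
    (⟨X, D, Y, f, g, h⟩ : RightTriangle C T) ∈ rt.dist ∧
    X ∈ 𝒳 ∧ D ∈ 𝒟 ∧ SMonic 𝒟 f ∧ SEpic 𝒟 g}

/-- `(𝒳, 𝒴)` is a `𝒟`-mutation pair. -/
def IsMutationPair (𝒳 𝒴 𝒟 : Set C) : Prop :=
  muInvSet rt 𝒳 𝒟 = 𝒴 ∧ muSet rt 𝒴 𝒟 = 𝒳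

/-- `𝒵` is extension-closed. -/
def ExtClosed (𝒵 : Set C) : Prop :=
  ∀ t ∈ rt.dist, t.obj₁ ∈ 𝒵 → t.obj₃ ∈ 𝒵 → t.obj₂ ∈ 𝒵

end Mutation

section Quotient

variable [Preadditive C] (𝒵 𝒟 : Set C)

/-- The ideal relation: two morphisms of the full subcategory on `𝒵` are identified
iff their difference factors through an object of `𝒟`. -/
def stableRel : HomRel (ObjectProperty.FullSubcategory (· ∈ 𝒵)) :=
  fun {X Y} f g =>
    FactorsThru 𝒟 (f.hom - g.hom)

/-- The quotient category `𝒵/𝒟`. -/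
abbrev ZModD := CategoryTheory.Quotient (stableRel 𝒵 𝒟)

/-- The quotient functor `𝒵 ⟶ 𝒵/𝒟`. -/
abbrev zquot : ObjectProperty.FullSubcategory (· ∈ 𝒵) ⥤ ZModD 𝒵 𝒟 :=
  Quotient.functor (stableRel 𝒵 𝒟)

end Quotient


section AuxLemmas

open ZeroObject

variable [Preadditive C] [HasZeroObject C] [HasFiniteBiproducts C] {T : C ⥤ C}

/-- Consecutive morphisms in a distinguished right triangle compose to zero. -/
lemma aux_comp12 (rt : RightTriangulated T) {t : RightTriangle C T} (ht : t ∈ rt.dist) :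
    t.mor₁ ≫ t.mor₂ = 0 := by
  have h1 : (⟨t.obj₁, t.obj₁, T.obj 0, 𝟙 t.obj₁, (0 : t.obj₁ ⟶ T.obj 0),
      -T.map (0 : (0 : C) ⟶ t.obj₁)⟩ : RightTriangle C T) ∈ rt.dist :=
    rt.tr3 _ (rt.tr1 t.obj₁)
  obtain ⟨c, hc, -⟩ := rt.tr4 _ h1 t ht (𝟙 t.obj₁) t.mor₁ (by simp)
  simpa using hc.symm

/-- Contravariant exactness: a morphism out of the middle object killed by `mor₁`
factors through `mor₂`. -/
lemma aux_contra (rt : RightTriangulated T) {t : RightTriangle C T} (ht : t ∈ rt.dist)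
    {X : C} (φ : t.obj₂ ⟶ X) (hφ : t.mor₁ ≫ φ = 0) :
    ∃ ψ : t.obj₃ ⟶ X, t.mor₂ ≫ ψ = φ := by
  obtain ⟨c, hc, -⟩ := rt.tr4 t ht _ (rt.tr1 X) (0 : t.obj₁ ⟶ (0 : C)) φ (by simp [hφ])
  exact ⟨c, by simpa using hc⟩

/-- Under Assumption 2.10, the shift functor is faithful. -/
lemma aux_faithful (rt : RightTriangulated T) (h210 : Assumption210 rt)
    {X Y : C} (ε : X ⟶ Y) (hε : T.map ε = 0) : ε = 0 := by
  haveI : T.Additive := rt.shift_additive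
  obtain ⟨Q, dq, dq', hQ⟩ := rt.tr2 ε
  have h1 : (⟨Y, Q, T.obj X, dq, dq', -T.map ε⟩ : RightTriangle C T) ∈ rt.dist :=
    rt.tr3 _ hQ
  rw [hε, neg_zero] at h1
  have h3 : (⟨X, Y, Q, (0 : X ⟶ Y), dq, dq'⟩ : RightTriangle C T) ∈ rt.dist := by
    apply h210
    simpa using h1
  obtain ⟨r, hr⟩ := aux_contra rt h3 (𝟙 Y) (by simp)
  have h4 : ε ≫ dq = 0 := aux_comp12 rt hQ
  calc ε = ε ≫ 𝟙 Y := by simp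
    _ = ε ≫ dq ≫ r := by rw [hr]
    _ = 0 := by rw [← Category.assoc, h4, zero_comp]

/-- The factorization lemma: if `x ≫ γ = 0` for a triangle `A ⟶ D ⟶ S ⟶ TA`
with `D ∈ 𝒟`, then `x` factors through `β : D ⟶ S`. -/
lemma aux_factor (rt : RightTriangulated T)
    (h210 : Assumption210 rt) {𝒟 : Set C} (hfte : FactorThroughEpic T 𝒟)
    {A D S : C} (hD : D ∈ 𝒟) {α : A ⟶ D} {β : D ⟶ S} {γ : S ⟶ T.obj A}
    (htri : (⟨A, D, S, α, β, γ⟩ : RightTriangle C T) ∈ rt.dist)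
    {X : C} (x : X ⟶ S) (hx : x ≫ γ = 0) :
    ∃ j : X ⟶ D, j ≫ β = x := by
  haveI : T.Additive := rt.shift_additive
  have h2 : (⟨S, T.obj A, T.obj D, γ, -T.map α, -T.map β⟩ : RightTriangle C T) ∈ rt.dist :=
    rt.tr3 _ (rt.tr3 _ htri)
  obtain ⟨W, w, w', hW⟩ := rt.tr2 (0 : X ⟶ T.obj A)
  obtain ⟨i, hi1, hi2⟩ := rt.tr4 _ hW _ h2 x (𝟙 (T.obj A)) (by simp [hx])
  replace hi1 : w ≫ i = -T.map α := by simpa using hi1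
  replace hi2 : w' ≫ T.map x = -(i ≫ T.map β) := by simpa using hi2
  obtain ⟨π, hπ⟩ := aux_contra rt hW (𝟙 (T.obj A)) (by simp)
  have hW' : (⟨T.obj A, W, T.obj X, w, w', -T.map (0 : X ⟶ T.obj A)⟩ :
      RightTriangle C T) ∈ rt.dist := rt.tr3 _ hW
  obtain ⟨j, hj⟩ := aux_contra rt hW' (i + π ≫ T.map α) (by
    rw [Preadditive.comp_add, hi1, ← Category.assoc, hπ, Category.id_comp, neg_add_cancel])
  have hW'' : (⟨W, T.obj X, T.obj (T.obj A), w', -T.map (0 : X ⟶ T.obj A), -T.map w⟩ :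
      RightTriangle C T) ∈ rt.dist := rt.tr3 _ hW'
  have hab : α ≫ β = 0 := aux_comp12 rt htri
  have hz : w' ≫ (j ≫ T.map β + T.map x) = 0 := by
    rw [Preadditive.comp_add, ← Category.assoc, hj, Preadditive.add_comp, hi2,
      Category.assoc, ← Functor.map_comp, hab, Functor.map_zero, comp_zero, add_zero,
      add_neg_cancel]
  obtain ⟨ψ, hψ⟩ := aux_contra rt hW'' (j ≫ T.map β + T.map x) hz
  have hzero : j ≫ T.map β + T.map x = 0 := by
    rw [← hψ]; simp
  obtain ⟨j₀, -, hj₀⟩ := hfte 0 X D j ⟨T.obj D, ⟨D, hD, rfl⟩, j, 𝟙 (T.obj D),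
    Category.comp_id j⟩
  refine ⟨-j₀, ?_⟩
  have h5 : j₀ ≫ β + x = 0 := aux_faithful rt h210 _ (by
    rw [Functor.map_add, Functor.map_comp, hj₀, hzero])
  rw [Preadditive.neg_comp]
  exact neg_eq_of_add_eq_zero_right h5

end AuxLemmas

theorem sigma_welldefined_additive {C : Type u} [Category.{v} C] [Preadditive C]
    [HasZeroObject C] [HasFiniteBiproducts C] {T : C ⥤ C} (rt : RightTriangulated T)
    (h210 : Assumption210 rt)
    (𝒟 𝒵 : Set C) (hsub𝒟 : IsSubcat 𝒟) (hsub𝒵 : IsSubcat 𝒵) (h𝒟𝒵 : 𝒟 ⊆ 𝒵)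
    (hfte : FactorThroughEpic T 𝒟) (hext : ExtClosed rt 𝒵)
    (hmu : muSet rt 𝒵 𝒟 = 𝒵)
    (DM σO : C → C) (α : ∀ M : C, M ⟶ DM M) (β : ∀ M : C, DM M ⟶ σO M)
    (γ : ∀ M : C, σO M ⟶ T.obj M)
    (hDM : ∀ M ∈ 𝒵, DM M ∈ 𝒟) (hσ : ∀ M ∈ 𝒵, σO M ∈ 𝒵)
    (htri : ∀ M ∈ 𝒵, (⟨M, DM M, σO M, α M, β M, γ M⟩ : RightTriangle C T) ∈ rt.dist)
    (hα : ∀ M ∈ 𝒵, SMonic 𝒟 (α M)) (hβ : ∀ M ∈ 𝒵, SEpic 𝒟 (β M)) :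
    ∃ (σfun : ZModD 𝒵 𝒟 ⥤ ZModD 𝒵 𝒟)
      (hobj : ∀ (M : C) (hM : M ∈ 𝒵),
        σfun.obj ((zquot 𝒵 𝒟).obj ⟨M, hM⟩) = (zquot 𝒵 𝒟).obj ⟨σO M, hσ M hM⟩),
      (∀ (M N : C) (hM : M ∈ 𝒵) (hN : N ∈ 𝒵) (μ : M ⟶ N) (g : DM M ⟶ DM N)
          (μ' : σO M ⟶ σO N),
          α M ≫ g = μ ≫ α N → β M ≫ μ' = g ≫ β N → γ M ≫ T.map μ = μ' ≫ γ N →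
          σfun.map ((zquot 𝒵 𝒟).map (ObjectProperty.homMk μ : (⟨M, hM⟩ : ObjectProperty.FullSubcategory (· ∈ 𝒵)) ⟶ ⟨N, hN⟩))
            = eqToHom (hobj M hM) ≫
              (zquot 𝒵 𝒟).map (ObjectProperty.homMk μ' : (⟨σO M, hσ M hM⟩ : ObjectProperty.FullSubcategory (· ∈ 𝒵)) ⟶ ⟨σO N, hσ N hN⟩)
              ≫ eqToHom (hobj N hN).symm) ∧
      (∀ (M N : C) (hM : M ∈ 𝒵) (hN : N ∈ 𝒵) (μ ν : M ⟶ N)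
          (g₁ g₂ : DM M ⟶ DM N) (μ' ν' : σO M ⟶ σO N),
          α M ≫ g₁ = μ ≫ α N → β M ≫ μ' = g₁ ≫ β N → γ M ≫ T.map μ = μ' ≫ γ N →
          α M ≫ g₂ = ν ≫ α N → β M ≫ ν' = g₂ ≫ β N → γ M ≫ T.map ν = ν' ≫ γ N →
          σfun.map ((zquot 𝒵 𝒟).map (ObjectProperty.homMk (μ + ν) : (⟨M, hM⟩ : ObjectProperty.FullSubcategory (· ∈ 𝒵)) ⟶ ⟨N, hN⟩))
            = eqToHom (hobj M hM) ≫
              (zquot 𝒵 𝒟).map (ObjectProperty.homMk (μ' + ν') : (⟨σO M, hσ M hM⟩ : ObjectProperty.FullSubcategory (· ∈ 𝒵)) ⟶ ⟨σO N, hσ N hN⟩)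
              ≫ eqToHom (hobj N hN).symm) := by
  classical
  haveI : T.Additive := rt.shift_additive
  -- γ M kills T (α M)
  have hγα : ∀ (M : C), M ∈ 𝒵 → γ M ≫ T.map (α M) = 0 := by
    intro M hM
    have h2 : (⟨σO M, T.obj M, T.obj (DM M), γ M, -T.map (α M), -T.map (β M)⟩ :
        RightTriangle C T) ∈ rt.dist := rt.tr3 _ (rt.tr3 _ (htri M hM))
    have h3 := aux_comp12 rt h2
    simpa using h3
  -- a morphism factoring through 𝒟 is killed by γ ≫ T(-)
  have hkerγ : ∀ (M N : C), M ∈ 𝒵 → ∀ (e : M ⟶ N), FactorsThru 𝒟 e →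
      γ M ≫ T.map e = 0 := by
    rintro M N hM e ⟨D₀, hD₀, u, v, rfl⟩
    obtain ⟨u₁, hu₁⟩ := hα M hM D₀ hD₀ u
    rw [← hu₁, Category.assoc, Functor.map_comp, ← Category.assoc, hγα M hM, zero_comp]
  -- main factorization
  have key : ∀ (N : C) (hN : N ∈ 𝒵) (X : C) (x : X ⟶ σO N),
      x ≫ γ N = 0 → FactorsThru 𝒟 x := by
    intro N hN X x hx
    obtain ⟨j, hj⟩ := aux_factor rt h210 hfte (hDM N hN) (htri N hN) x hx
    exact ⟨DM N, hDM N hN, j, β N, hj⟩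
  -- existence of lifts
  have exlift : ∀ (X Y : ObjectProperty.FullSubcategory (· ∈ 𝒵)) (μ : X.obj ⟶ Y.obj),
      ∃ μ' : σO X.obj ⟶ σO Y.obj, μ' ≫ γ Y.obj = γ X.obj ≫ T.map μ := by
    intro X Y μ
    obtain ⟨g, hg⟩ := hα X.obj X.property (DM Y.obj) (hDM Y.obj Y.property) (μ ≫ α Y.obj)
    obtain ⟨c, -, hc2⟩ := rt.tr4 _ (htri X.obj X.property) _ (htri Y.obj Y.property) μ g hg
    exact ⟨c, hc2.symm⟩
  choose L hL using exlift
  -- two maps with the same γ-composite agree in the quotient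
  have srel : ∀ (X Y : ObjectProperty.FullSubcategory (· ∈ 𝒵)) (x y : σO X.obj ⟶ σO Y.obj),
      x ≫ γ Y.obj = y ≫ γ Y.obj →
      (zquot 𝒵 𝒟).map (X := ⟨σO X.obj, hσ X.obj X.property⟩)
        (Y := ⟨σO Y.obj, hσ Y.obj Y.property⟩) (ObjectProperty.homMk x) = (zquot 𝒵 𝒟).map (ObjectProperty.homMk y) := by
    intro X Y x y hxy
    refine CategoryTheory.Quotient.sound _ ?_
    show FactorsThru 𝒟 _
    exact key Y.obj Y.property _ (x - y) (by rw [Preadditive.sub_comp, hxy, sub_self])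
  refine ⟨CategoryTheory.Quotient.lift (stableRel 𝒵 𝒟)
    { obj := fun X => (zquot 𝒵 𝒟).obj ⟨σO X.obj, hσ X.obj X.property⟩
      map := fun {X Y} μ => (zquot 𝒵 𝒟).map (X := ⟨σO X.obj, hσ X.obj X.property⟩)
        (Y := ⟨σO Y.obj, hσ Y.obj Y.property⟩) (ObjectProperty.homMk (L X Y μ.hom))
      map_id := fun X => by
        refine (srel X X _ (𝟙 (σO X.obj)) ?_).trans ((zquot 𝒵 𝒟).map_id _)
        rw [hL]
        show γ X.obj ≫ T.map (𝟙 X.obj) = 𝟙 (σO X.obj) ≫ γ X.obj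
        simp
      map_comp := fun {X Y Z} f g => by
        show (zquot 𝒵 𝒟).map (X := ⟨σO X.obj, hσ X.obj X.property⟩)
            (Y := ⟨σO Z.obj, hσ Z.obj Z.property⟩) (ObjectProperty.homMk (L X Z (f ≫ g).hom))
          = (zquot 𝒵 𝒟).map (X := ⟨σO X.obj, hσ X.obj X.property⟩)
              (Y := ⟨σO Y.obj, hσ Y.obj Y.property⟩) (ObjectProperty.homMk (L X Y f.hom))
            ≫ (zquot 𝒵 𝒟).map (X := ⟨σO Y.obj, hσ Y.obj Y.property⟩)
              (Y := ⟨σO Z.obj, hσ Z.obj Z.property⟩) (ObjectProperty.homMk (L Y Z g.hom))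
        rw [← (zquot 𝒵 𝒟).map_comp]
        refine srel X Z _ (L X Y f.hom ≫ L Y Z g.hom) ?_
        rw [hL, Category.assoc, hL, ← Category.assoc, hL, Category.assoc,
          ← Functor.map_comp]
        try rfl }
    (fun X Y f₁ f₂ h => srel X Y (L X Y f₁.hom) (L X Y f₂.hom) (by
      have hd : γ X.obj ≫ T.map (f₁.hom - f₂.hom) = 0 :=
        hkerγ X.obj Y.obj X.property _ h
      rw [hL, hL, ← sub_eq_zero, ← Preadditive.comp_sub, ← Functor.map_sub]
      exact hd)),
    fun M hM => rfl, ?_, ?_⟩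
  · intro M N hM hN μ g μ' h1 h2 h3
    simp only [eqToHom_refl, Category.comp_id, Category.id_comp]
    exact srel ⟨M, hM⟩ ⟨N, hN⟩ _ μ' ((hL _ _ _).trans h3)
  · intro M N hM hN μ ν g₁ g₂ μ' ν' h1 h2 h3 h4 h5 h6
    simp only [eqToHom_refl, Category.comp_id, Category.id_comp]
    have hcond : L ⟨M, hM⟩ ⟨N, hN⟩ (μ + ν) ≫ γ N = (μ' + ν') ≫ γ N := by
      rw [hL]
      show γ M ≫ T.map (μ + ν) = (μ' + ν') ≫ γ N
      rw [Functor.map_add, Preadditive.comp_add, h3, h6, ← Preadditive.add_comp]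
    exact srel ⟨M, hM⟩ ⟨N, hN⟩ _ (μ' + ν') hcond
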